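/- Let a > 0, R > 0, and p : S² → ℝ with ∫_{S²} p(u)² du ≥ π a² and ∫_{S²} p(u) du = 2π a. Then ∫_{S²} ∫₀^a 4π² (R² − (p(u) − t)²) dt du ≤ 16π³ (R² a − a³/12). -/

import Mathlib

open MeasureTheory Metric

noncomputable section

abbrev E3 := EuclideanSpace ℝ (Fin 3)

/-- The surface measure on the unit sphere `S² ⊂ ℝ³` (total mass `4π`). -/
def sphereMeasure : Measure (sphere (0 : E3) 1) := (volume : Measure E3).toSphere

lemma sphereMeasure_univ : (sphereMeasure Set.univ).toReal = 4 * Real.pi := by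
  have h := Measure.toSphere_apply_univ (volume : Measure E3)
  have hdim : Module.finrank ℝ E3 = 3 := by simp [finrank_euclideanSpace]
  have hball : volume (ball (0 : E3) 1) = ENNReal.ofReal (4 * Real.pi / 3) := by
    rw [EuclideanSpace.volume_ball]
    have hΓ : Real.Gamma ((Fintype.card (Fin 3) : ℝ) / 2 + 1) = 3 / 4 * Real.sqrt Real.pi := by
      have : ((Fintype.card (Fin 3) : ℝ) / 2 + 1) = (1/2 + 1) + 1 := by
        simp [Fintype.card_fin]; ring
      rw [this, Real.Gamma_add_one (by norm_num), Real.Gamma_add_one (by norm_num),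
        Real.Gamma_one_half_eq]
      ring
    rw [hΓ]
    have hs : Real.sqrt Real.pi ^ Fintype.card (Fin 3)
        = Real.pi * Real.sqrt Real.pi := by
      rw [Fintype.card_fin, pow_succ, sq, Real.mul_self_sqrt Real.pi_pos.le]
    rw [hs]
    have hsp : (0:ℝ) < Real.sqrt Real.pi := Real.sqrt_pos.mpr Real.pi_pos
    rw [ENNReal.ofReal_one, one_pow, one_mul]
    congr 1
    field_simp
  rw [sphereMeasure, h, hball, hdim]
  rw [← ENNReal.ofReal_natCast, ← ENNReal.ofReal_mul (by positivity)]
  rw [ENNReal.toReal_ofReal (by positivity)]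
  ring

/-- Let `a > 0`, `R > 0` and `p : S² → ℝ` with `∫_{S²} p(u)² du ≥ π a²` and
`∫_{S²} p(u) du = 2π a`.  Then
`∫_{S²} ∫₀^a 4π² (R² − (p(u) − t)²) dt du ≤ 16π³ (R² a − a³/12)`. -/
theorem key_estimate_constant_width
    (a R : ℝ) (ha : 0 < a) (hR : 0 < R) (p : sphere (0 : E3) 1 → ℝ)
    (hpi : Integrable p sphereMeasure)
    (hpi2 : Integrable (fun u => p u ^ 2) sphereMeasure)
    (hp2 : Real.pi * a ^ 2 ≤ ∫ u, p u ^ 2 ∂sphereMeasure)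
    (hp1 : (∫ u, p u ∂sphereMeasure) = 2 * Real.pi * a) :
    (∫ u, (∫ t in (0 : ℝ)..a, 4 * Real.pi ^ 2 * (R ^ 2 - (p u - t) ^ 2)) ∂sphereMeasure) ≤
      16 * Real.pi ^ 3 * (R ^ 2 * a - a ^ 3 / 12) := by
  have pi_pos := Real.pi_pos
  -- inner integral
  have inner : ∀ c : ℝ, (∫ t in (0 : ℝ)..a, 4 * Real.pi ^ 2 * (R ^ 2 - (c - t) ^ 2))
      = 4 * Real.pi ^ 2 * (R ^ 2 * a - a ^ 3 / 3 + a ^ 2 * c - a * c ^ 2) := by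
    intro c
    have hderiv : ∀ t ∈ Set.uIcc (0:ℝ) a,
        HasDerivAt (fun s => 4 * Real.pi ^ 2 * (R ^ 2 * s + (c - s) ^ 3 / 3))
          (4 * Real.pi ^ 2 * (R ^ 2 - (c - t) ^ 2)) t := by
      intro t _
      have h1 : HasDerivAt (fun s : ℝ => R ^ 2 * s + (c - s) ^ 3 / 3)
          (R ^ 2 - (c - t) ^ 2) t := by
        have h2 : HasDerivAt (fun s : ℝ => (c - s)) (-1) t := by
          simpa using (hasDerivAt_id t).const_sub c
        have h3 : HasDerivAt (fun s : ℝ => (c - s) ^ 3) (3 * (c - t) ^ 2 * (-1)) t :=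
          (h2.pow 3).congr_deriv (by ring)
        have := ((hasDerivAt_id t).const_mul (R ^ 2)).add (h3.div_const 3)
        exact this.congr_deriv (by ring)
      simpa using h1.const_mul (4 * Real.pi ^ 2)
    have hcont : IntervalIntegrable (fun t => 4 * Real.pi ^ 2 * (R ^ 2 - (c - t) ^ 2))
        volume 0 a := (Continuous.intervalIntegrable (by continuity) _ _)
    rw [intervalIntegral.integral_eq_sub_of_hasDerivAt hderiv hcont]
    ring
  simp_rw [inner]
  -- outer integral
  haveI : IsFiniteMeasure sphereMeasure := by unfold sphereMeasure; infer_instance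
  have hconst : Integrable (fun _ : sphere (0 : E3) 1 =>
      4 * Real.pi ^ 2 * (R ^ 2 * a - a ^ 3 / 3)) sphereMeasure := integrable_const _
  have h1 : Integrable (fun u => 4 * Real.pi ^ 2 * a ^ 2 * p u) sphereMeasure :=
    hpi.const_mul _
  have h2 : Integrable (fun u => 4 * Real.pi ^ 2 * a * p u ^ 2) sphereMeasure :=
    hpi2.const_mul _
  have heq : (fun u => 4 * Real.pi ^ 2 *
        (R ^ 2 * a - a ^ 3 / 3 + a ^ 2 * p u - a * p u ^ 2))
      = fun u => (4 * Real.pi ^ 2 * (R ^ 2 * a - a ^ 3 / 3)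
        + 4 * Real.pi ^ 2 * a ^ 2 * p u) - 4 * Real.pi ^ 2 * a * p u ^ 2 := by
    funext u; ring
  have h12 : Integrable (fun u => 4 * Real.pi ^ 2 * (R ^ 2 * a - a ^ 3 / 3)
      + 4 * Real.pi ^ 2 * a ^ 2 * p u) sphereMeasure := hconst.add h1
  have e1 := integral_sub h12 h2
  have e2 := integral_add hconst h1
  rw [heq]
  rw [e1, e2, integral_const, integral_const_mul, integral_const_mul, hp1, smul_eq_mul,
    measureReal_def, sphereMeasure_univ]
  have hI2 : Real.pi * a ^ 2 ≤ ∫ u, p u ^ 2 ∂sphereMeasure := hp2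
  nlinarith [mul_le_mul_of_nonneg_left hI2 (by positivity :
    (0:ℝ) ≤ 4 * Real.pi ^ 2 * a), sq_nonneg Real.pi, Real.pi_pos]

end
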